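/- Let R be a commutative ring with 1 and n ≥ 3. Suppose every matrix in the elementary subgroup E_{n-1}(R) can be written as a product of L matrices that are alternately lower and upper unitriangular (starting with a lower unitriangular one). Then every matrix in the elementary subgroup E_n(R) can be written as a product of L matrices that are alternately lower and upper unitriangular (starting with a lower unitriangular one). -/

import Mathlib

/-- `M` is an elementary matrix `1 + r • E i j` with `i ≠ j`. -/
def IsElementary {R : Type*} [CommRing R] {m : ℕ}
    (M : Matrix (Fin m) (Fin m) R) : Prop :=
  ∃ i j : Fin m, ∃ r : R, i ≠ j ∧ M = 1 + Matrix.single i j r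

/-- `M` belongs to the elementary subgroup `E_m(R)`, i.e. it is a finite product of
elementary matrices (the generating set is symmetric, so this is the generated subgroup). -/
def MemElemGroup {R : Type*} [CommRing R] {m : ℕ}
    (M : Matrix (Fin m) (Fin m) R) : Prop :=
  ∃ l : List (Matrix (Fin m) (Fin m) R), (∀ A ∈ l, IsElementary A) ∧ l.prod = M

/-- `M` is lower unitriangular. -/
def IsLowerUnitriangular {R : Type*} [CommRing R] {m : ℕ}
    (M : Matrix (Fin m) (Fin m) R) : Prop :=
  (∀ i, M i i = 1) ∧ ∀ i j : Fin m, i < j → M i j = 0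

/-- `M` is upper unitriangular. -/
def IsUpperUnitriangular {R : Type*} [CommRing R] {m : ℕ}
    (M : Matrix (Fin m) (Fin m) R) : Prop :=
  (∀ i, M i i = 1) ∧ ∀ i j : Fin m, j < i → M i j = 0

/-- `M` is a product of `L` matrices which are alternately lower and upper unitriangular,
starting with a lower unitriangular one. -/
def HasAltUnitriangularFactorization {R : Type*} [CommRing R] {m : ℕ} (L : ℕ)
    (M : Matrix (Fin m) (Fin m) R) : Prop :=
  ∃ f : Fin L → Matrix (Fin m) (Fin m) R,
    (∀ k : Fin L, if k.1 % 2 = 0 then IsLowerUnitriangular (f k)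
      else IsUpperUnitriangular (f k)) ∧
    (List.ofFn f).prod = M

namespace Tavgen

open Matrix

variable {R : Type*} [CommRing R]

/-- Uniform triangularity: `Tri true` is lower, `Tri false` is upper. -/
def Tri {m : ℕ} (b : Bool) (M : Matrix (Fin m) (Fin m) R) : Prop :=
  match b with
  | true => IsLowerUnitriangular M
  | false => IsUpperUnitriangular M

lemma tri_diag {m : ℕ} {b : Bool} {M : Matrix (Fin m) (Fin m) R} (h : Tri b M) (i : Fin m) :
    M i i = 1 := by cases b <;> exact h.1 i

lemma tri_of_if {m : ℕ} {P : Prop} [Decidable P] {M : Matrix (Fin m) (Fin m) R}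
    (h : if P then IsLowerUnitriangular M else IsUpperUnitriangular M) :
    Tri (decide P) M := by
  by_cases hP : P <;> simp [hP] at h ⊢ <;> exact h

lemma tri_to_if {m : ℕ} {P : Prop} [Decidable P] {M : Matrix (Fin m) (Fin m) R}
    (h : Tri (decide P) M) :
    if P then IsLowerUnitriangular M else IsUpperUnitriangular M := by
  by_cases hP : P <;> simp [hP] at h ⊢ <;> exact h

lemma tri_one {m : ℕ} (b : Bool) : Tri b (1 : Matrix (Fin m) (Fin m) R) := by
  cases b <;>
  exact ⟨fun i => Matrix.one_apply_eq i, fun i j hij => Matrix.one_apply_ne (by rintro rfl; exact absurd hij (lt_irrefl _))⟩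

lemma isLower_mul {m : ℕ} {A B : Matrix (Fin m) (Fin m) R}
    (hA : IsLowerUnitriangular A) (hB : IsLowerUnitriangular B) :
    IsLowerUnitriangular (A * B) := by
  constructor
  · intro i
    rw [Matrix.mul_apply, Finset.sum_eq_single i]
    · rw [hA.1, hB.1, one_mul]
    · intro k _ hk
      rcases lt_or_gt_of_ne hk with h | h
      · rw [hB.2 k i h, mul_zero]
      · rw [hA.2 i k h, zero_mul]
    · simp
  · intro i j hij
    rw [Matrix.mul_apply]
    apply Finset.sum_eq_zero
    intro k _
    rcases lt_or_ge i k with h | h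
    · rw [hA.2 i k h, zero_mul]
    · rw [hB.2 k j (lt_of_le_of_lt h hij), mul_zero]

lemma isUpper_mul {m : ℕ} {A B : Matrix (Fin m) (Fin m) R}
    (hA : IsUpperUnitriangular A) (hB : IsUpperUnitriangular B) :
    IsUpperUnitriangular (A * B) := by
  constructor
  · intro i
    rw [Matrix.mul_apply, Finset.sum_eq_single i]
    · rw [hA.1, hB.1, one_mul]
    · intro k _ hk
      rcases lt_or_gt_of_ne hk with h | h
      · rw [hA.2 i k h, zero_mul]
      · rw [hB.2 k i h, mul_zero]
    · simp
  · intro i j hij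
    rw [Matrix.mul_apply]
    apply Finset.sum_eq_zero
    intro k _
    rcases lt_or_ge k i with h | h
    · rw [hA.2 i k h, zero_mul]
    · rw [hB.2 k j (lt_of_lt_of_le hij h), mul_zero]

lemma tri_mul {m : ℕ} {b : Bool} {A B : Matrix (Fin m) (Fin m) R}
    (hA : Tri b A) (hB : Tri b B) : Tri b (A * B) := by
  cases b
  · exact isUpper_mul hA hB
  · exact isLower_mul hA hB

lemma elem_mul_neg {m : ℕ} {i j : Fin m} (hij : i ≠ j) (r : R) :
    (1 + Matrix.single i j r) * (1 + Matrix.single i j (-r)) = 1 := by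
  rw [mul_add, mul_one, add_mul, one_mul,
    Matrix.single_mul_single_of_ne (c := r) i j i (Ne.symm hij) (-r), add_zero, add_assoc,
    ← Matrix.single_add]
  simp

/-- The unit corresponding to an elementary matrix. -/
def elemUnit {m : ℕ} (i j : Fin m) (hij : i ≠ j) (r : R) : (Matrix (Fin m) (Fin m) R)ˣ :=
  ⟨1 + Matrix.single i j r, 1 + Matrix.single i j (-r),
    elem_mul_neg hij r, by simpa using elem_mul_neg hij (-r)⟩

lemma memElemGroup_one {m : ℕ} : MemElemGroup (1 : Matrix (Fin m) (Fin m) R) :=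
  ⟨[], by simp, by simp⟩

lemma memElemGroup_mul {m : ℕ} {A B : Matrix (Fin m) (Fin m) R}
    (hA : MemElemGroup A) (hB : MemElemGroup B) : MemElemGroup (A * B) := by
  obtain ⟨l1, h1, rfl⟩ := hA
  obtain ⟨l2, h2, rfl⟩ := hB
  refine ⟨l1 ++ l2, ?_, by rw [List.prod_append]⟩
  intro x hx
  rcases List.mem_append.1 hx with h | h
  exacts [h1 x h, h2 x h]

lemma memElemGroup_isUnit {m : ℕ} {A : Matrix (Fin m) (Fin m) R}
    (hA : MemElemGroup A) : IsUnit A := by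
  obtain ⟨l, hl, rfl⟩ := hA
  induction l with
  | nil => simp
  | cons a l ih =>
    rw [List.prod_cons]
    refine IsUnit.mul ?_ (ih (fun x hx => hl x (List.mem_cons_of_mem a hx)))
    obtain ⟨i, j, r, hij, rfl⟩ := hl a (List.mem_cons_self)
    exact ⟨elemUnit i j hij r, rfl⟩

section Emb

variable {m : ℕ} (p : Fin (m + 1))

/-- Embedding of a small matrix into the big one, skipping index `p`. -/
def emb (M : Matrix (Fin m) (Fin m) R) : Matrix (Fin (m + 1)) (Fin (m + 1)) R :=
  Matrix.of fun i j =>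
    match finSuccEquiv' p i, finSuccEquiv' p j with
    | none, none => 1
    | some i', some j' => M i' j'
    | _, _ => 0

@[simp] lemma emb_app_pp (M : Matrix (Fin m) (Fin m) R) : emb p M p p = 1 := by
  simp [emb, finSuccEquiv'_at]

@[simp] lemma emb_app_ss (M : Matrix (Fin m) (Fin m) R) (i j : Fin m) :
    emb p M (p.succAbove i) (p.succAbove j) = M i j := by
  simp [emb, finSuccEquiv'_succAbove]

@[simp] lemma emb_app_ps (M : Matrix (Fin m) (Fin m) R) (j : Fin m) :
    emb p M p (p.succAbove j) = 0 := by
  simp [emb, finSuccEquiv'_at, finSuccEquiv'_succAbove]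

@[simp] lemma emb_app_sp (M : Matrix (Fin m) (Fin m) R) (i : Fin m) :
    emb p M (p.succAbove i) p = 0 := by
  simp [emb, finSuccEquiv'_at, finSuccEquiv'_succAbove]

lemma emb_row_p (M : Matrix (Fin m) (Fin m) R) (j : Fin (m + 1)) :
    emb p M p j = if p = j then 1 else 0 := by
  rcases eq_or_ne p j with rfl | hj
  · simp
  · obtain ⟨j', rfl⟩ := Fin.exists_succAbove_eq hj.symm
    simp [(Fin.ne_succAbove p j')]

lemma emb_col_p (M : Matrix (Fin m) (Fin m) R) (i : Fin (m + 1)) :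
    emb p M i p = if i = p then 1 else 0 := by
  rcases eq_or_ne p i with rfl | hi
  · simp
  · obtain ⟨i', rfl⟩ := Fin.exists_succAbove_eq hi.symm
    simp [(Fin.succAbove_ne p i')]

lemma emb_one : emb p (1 : Matrix (Fin m) (Fin m) R) = 1 := by
  ext i j
  rcases eq_or_ne p i with rfl | hi
  · rw [emb_row_p, Matrix.one_apply]
  · obtain ⟨i', rfl⟩ := Fin.exists_succAbove_eq hi.symm
    rcases eq_or_ne p j with rfl | hj
    · simp [Matrix.one_apply, (Fin.succAbove_ne p i')]
    · obtain ⟨j', rfl⟩ := Fin.exists_succAbove_eq hj.symm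
      simp [Matrix.one_apply, (Fin.succAbove_right_injective (p := p)).eq_iff]

lemma emb_mul (A B : Matrix (Fin m) (Fin m) R) :
    emb p (A * B) = emb p A * emb p B := by
  ext i j
  rw [Matrix.mul_apply, Fin.sum_univ_succAbove _ p]
  rcases eq_or_ne p i with rfl | hi
  · rcases eq_or_ne p j with rfl | hj
    · simp
    · obtain ⟨j', rfl⟩ := Fin.exists_succAbove_eq hj.symm
      simp
  · obtain ⟨i', rfl⟩ := Fin.exists_succAbove_eq hi.symm
    rcases eq_or_ne p j with rfl | hj
    · simp
    · obtain ⟨j', rfl⟩ := Fin.exists_succAbove_eq hj.symm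
      simp [Matrix.mul_apply]

/-- `emb` as a monoid hom. -/
def embM : Matrix (Fin m) (Fin m) R →* Matrix (Fin (m + 1)) (Fin (m + 1)) R where
  toFun := emb p
  map_one' := emb_one p
  map_mul' := emb_mul p

/-- Strip the `p`-th row and column. -/
def strip (W : Matrix (Fin (m + 1)) (Fin (m + 1)) R) : Matrix (Fin m) (Fin m) R :=
  Matrix.of fun i j => W (p.succAbove i) (p.succAbove j)

lemma emb_strip {W : Matrix (Fin (m + 1)) (Fin (m + 1)) R}
    (hrow : ∀ j, W p j = if p = j then 1 else 0)
    (hcol : ∀ i, W i p = if i = p then 1 else 0) :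
    emb p (strip p W) = W := by
  ext i j
  rcases eq_or_ne p i with rfl | hi
  · rw [emb_row_p, hrow]
  · obtain ⟨i', rfl⟩ := Fin.exists_succAbove_eq hi.symm
    rcases eq_or_ne p j with rfl | hj
    · rw [emb_col_p, hcol]
    · obtain ⟨j', rfl⟩ := Fin.exists_succAbove_eq hj.symm
      simp [strip]

lemma tri_strip {b : Bool} {W : Matrix (Fin (m + 1)) (Fin (m + 1)) R}
    (hW : Tri b W) : Tri b (strip p W) := by
  cases b <;>
  exact ⟨fun i => tri_diag hW _,
    fun i j hij => hW.2 _ _ (by rwa [Fin.succAbove_lt_succAbove_iff])⟩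

lemma tri_emb {b : Bool} {M : Matrix (Fin m) (Fin m) R}
    (hM : Tri b M) : Tri b (emb p M) := by
  have key : ∀ i j : Fin (m + 1), i ≠ j → (∀ i' j' : Fin m,
      p.succAbove i' = i → p.succAbove j' = j → M i' j' = 0) → emb p M i j = 0 := by
    intro i j hij hz
    rcases eq_or_ne p i with rfl | hi
    · rw [emb_row_p, if_neg hij]
    · obtain ⟨i', rfl⟩ := Fin.exists_succAbove_eq hi.symm
      rcases eq_or_ne p j with rfl | hj
      · simp
      · obtain ⟨j', rfl⟩ := Fin.exists_succAbove_eq hj.symm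
        rw [emb_app_ss]
        exact hz i' j' rfl rfl
  have diag : ∀ i, emb p M i i = 1 := by
    intro i
    rcases eq_or_ne p i with rfl | hi
    · simp
    · obtain ⟨i', rfl⟩ := Fin.exists_succAbove_eq hi.symm
      rw [emb_app_ss]
      exact tri_diag hM i'
  cases b
  · exact ⟨diag, fun i j hij => key i j (ne_of_gt hij)
      (fun i' j' hi hj => hM.2 i' j' (by rw [← Fin.succAbove_lt_succAbove_iff (p := p), hi, hj]; exact hij))⟩
  · exact ⟨diag, fun i j hij => key i j (ne_of_lt hij)
      (fun i' j' hi hj => hM.2 i' j' (by rw [← Fin.succAbove_lt_succAbove_iff (p := p), hi, hj]; exact hij))⟩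

lemma emb_elementary (i j : Fin m) (r : R) :
    emb p (1 + Matrix.single i j r) =
      1 + Matrix.single (p.succAbove i) (p.succAbove j) r := by
  ext a b
  rcases eq_or_ne p a with rfl | ha
  · rw [emb_row_p]
    rw [Matrix.add_apply, Matrix.one_apply,
      Matrix.single_apply_of_row_ne (Ne.symm (Fin.ne_succAbove p i))]
    simp [eq_comm]
  · obtain ⟨a', rfl⟩ := Fin.exists_succAbove_eq ha.symm
    rcases eq_or_ne p b with rfl | hb
    · rw [emb_col_p, Matrix.add_apply, Matrix.one_apply,
        Matrix.single_apply_of_col_ne _ _ (Ne.symm (Fin.ne_succAbove p j))]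
      simp [(Fin.succAbove_ne p a')]
    · obtain ⟨b', rfl⟩ := Fin.exists_succAbove_eq hb.symm
      rw [emb_app_ss, Matrix.add_apply, Matrix.add_apply, Matrix.one_apply, Matrix.one_apply]
      by_cases h1 : i = a' ∧ j = b'
      · obtain ⟨rfl, rfl⟩ := h1
        simp [(Fin.succAbove_right_injective (p := p)).eq_iff]
      · rw [Matrix.single_apply_of_ne (h := h1),
          Matrix.single_apply_of_ne]
        · simp [(Fin.succAbove_right_injective (p := p)).eq_iff]
        · intro hc
          exact h1 ⟨Fin.succAbove_right_injective hc.1, Fin.succAbove_right_injective hc.2⟩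

lemma memElemGroup_emb {M : Matrix (Fin m) (Fin m) R}
    (hM : MemElemGroup M) : MemElemGroup (emb p M) := by
  obtain ⟨l, hl, rfl⟩ := hM
  refine ⟨l.map (emb p), ?_, ?_⟩
  · intro A hA
    obtain ⟨B, hB, rfl⟩ := List.mem_map.1 hA
    obtain ⟨i, j, r, hij, rfl⟩ := hl B hB
    exact ⟨p.succAbove i, p.succAbove j, r,
      fun hc => hij (Fin.succAbove_right_injective hc), emb_elementary p i j r⟩
  · exact ((embM p).map_list_prod l).symm

/-- `emb` on units. -/
def embU : (Matrix (Fin m) (Fin m) R)ˣ →* (Matrix (Fin (m + 1)) (Fin (m + 1)) R)ˣ :=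
  Units.map (embM p)

@[simp] lemma embU_val (w : (Matrix (Fin m) (Fin m) R)ˣ) :
    ((embU p w : (Matrix (Fin (m + 1)) (Fin (m + 1)) R)ˣ) : Matrix (Fin (m + 1)) (Fin (m + 1)) R) = emb p w.val := rfl

@[simp] lemma embU_inv (w : (Matrix (Fin m) (Fin m) R)ˣ) :
    (embU p w)⁻¹ = embU p w⁻¹ := (map_inv (embU p) w).symm

end Emb

section Z

variable {m : ℕ} (p : Fin (m + 1))

/-- The off-diagonal part of a row-type Z matrix. -/
def zrd (x : Fin (m + 1) → R) : Matrix (Fin (m + 1)) (Fin (m + 1)) R :=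
  Matrix.of fun i j => if i = p then x j else 0

/-- Row-type Z matrix: identity plus stuff in row `p`. -/
def zr (x : Fin (m + 1) → R) : Matrix (Fin (m + 1)) (Fin (m + 1)) R := 1 + zrd p x

/-- The off-diagonal part of a column-type Z matrix. -/
def zcd (x : Fin (m + 1) → R) : Matrix (Fin (m + 1)) (Fin (m + 1)) R :=
  Matrix.of fun i j => if j = p then x i else 0

/-- Column-type Z matrix: identity plus stuff in column `p`. -/
def zc (x : Fin (m + 1) → R) : Matrix (Fin (m + 1)) (Fin (m + 1)) R := 1 + zcd p x

/-- Z matrix of either type. -/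
def zOf (s : Bool) (x : Fin (m + 1) → R) : Matrix (Fin (m + 1)) (Fin (m + 1)) R :=
  match s with
  | true => zr p x
  | false => zc p x

lemma zrd_add (x y : Fin (m + 1) → R) : zrd p x + zrd p y = zrd p (x + y) := by
  ext i j
  by_cases hi : i = p <;> simp [zrd, hi]

lemma zcd_add (x y : Fin (m + 1) → R) : zcd p x + zcd p y = zcd p (x + y) := by
  ext i j
  by_cases hj : j = p <;> simp [zcd, hj]

@[simp] lemma zrd_zero : zrd p (0 : Fin (m + 1) → R) = 0 := by ext i j; simp [zrd]

@[simp] lemma zcd_zero : zcd p (0 : Fin (m + 1) → R) = 0 := by ext i j; simp [zcd]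

@[simp] lemma zr_zero : zr p (0 : Fin (m + 1) → R) = 1 := by simp [zr]

@[simp] lemma zc_zero : zc p (0 : Fin (m + 1) → R) = 1 := by simp [zc]

lemma zrd_mul_zrd {x : Fin (m + 1) → R} (hx : x p = 0) (y : Fin (m + 1) → R) :
    zrd p x * zrd p y = 0 := by
  ext i j
  rw [Matrix.mul_apply]
  by_cases hi : i = p
  · simp [zrd, hi, Finset.sum_ite_eq', hx]
  · simp [zrd, hi]

lemma zcd_mul_zcd (x : Fin (m + 1) → R) {y : Fin (m + 1) → R} (hy : y p = 0) :
    zcd p x * zcd p y = 0 := by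
  ext i j
  rw [Matrix.mul_apply]
  by_cases hj : j = p
  · simp [zcd, hj, Finset.sum_ite_eq', hy]
  · simp [zcd, hj]

lemma zr_mul {x : Fin (m + 1) → R} (hx : x p = 0) (y : Fin (m + 1) → R) :
    zr p x * zr p y = zr p (x + y) := by
  rw [zr, zr, zr, mul_add, mul_one, add_mul, one_mul, zrd_mul_zrd p hx, add_zero,
    add_assoc, zrd_add]

lemma zc_mul (x : Fin (m + 1) → R) {y : Fin (m + 1) → R} (hy : y p = 0) :
    zc p x * zc p y = zc p (x + y) := by
  rw [zc, zc, zc, mul_add, mul_one, add_mul, one_mul, zcd_mul_zcd p x hy, add_zero,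
    add_assoc, zcd_add]

/-- The unit given by a row-type Z matrix. -/
def zrU (x : Fin (m + 1) → R) (hx : x p = 0) : (Matrix (Fin (m + 1)) (Fin (m + 1)) R)ˣ :=
  ⟨zr p x, zr p (-x),
    by rw [zr_mul p hx]; simp,
    by rw [zr_mul p (show (-x) p = 0 by simp [hx])]; simp⟩

/-- The unit given by a column-type Z matrix. -/
def zcU (x : Fin (m + 1) → R) (hx : x p = 0) : (Matrix (Fin (m + 1)) (Fin (m + 1)) R)ˣ :=
  ⟨zc p x, zc p (-x),
    by rw [zc_mul p x (show (-x) p = 0 by simp [hx])]; simp,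
    by rw [zc_mul p (-x) hx]; simp⟩

lemma zrd_mul_W (x : Fin (m + 1) → R) (W : Matrix (Fin (m + 1)) (Fin (m + 1)) R) :
    zrd p x * W = zrd p (Matrix.vecMul x W) := by
  ext i j
  rw [Matrix.mul_apply]
  by_cases hi : i = p
  · simp [zrd, hi, Matrix.vecMul, dotProduct]
  · simp [zrd, hi]

lemma W_mul_zrd {W : Matrix (Fin (m + 1)) (Fin (m + 1)) R}
    (hcol : ∀ i, W i p = if i = p then 1 else 0) (x : Fin (m + 1) → R) :
    W * zrd p x = zrd p x := by
  ext i j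
  rw [Matrix.mul_apply]
  simp only [zrd, Matrix.of_apply, mul_ite, mul_zero, Finset.sum_ite_eq', Finset.mem_univ,
    if_true, hcol i]
  by_cases hi : i = p <;> simp [hi]

lemma W_mul_zcd (W : Matrix (Fin (m + 1)) (Fin (m + 1)) R) (x : Fin (m + 1) → R) :
    W * zcd p x = zcd p (Matrix.mulVec W x) := by
  ext i j
  rw [Matrix.mul_apply]
  by_cases hj : j = p
  · simp [zcd, hj, Matrix.mulVec, dotProduct]
  · simp [zcd, hj]

lemma zcd_mul_W {W : Matrix (Fin (m + 1)) (Fin (m + 1)) R}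
    (hrow : ∀ j, W p j = if p = j then 1 else 0) (x : Fin (m + 1) → R) :
    zcd p x * W = zcd p x := by
  ext i j
  rw [Matrix.mul_apply]
  simp only [zcd, Matrix.of_apply, ite_mul, zero_mul]
  rw [Finset.sum_ite_eq' Finset.univ p (fun k => x i * W k j), if_pos (Finset.mem_univ p), hrow j]
  by_cases hj : j = p
  · rw [if_pos (hj ▸ rfl : p = j), if_pos hj, mul_one]
  · rw [if_neg (fun hc : p = j => hj hc.symm), if_neg hj, mul_zero]

lemma vecMul_p {W : Matrix (Fin (m + 1)) (Fin (m + 1)) R}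
    (hcol : ∀ i, W i p = if i = p then 1 else 0) {x : Fin (m + 1) → R} (hx : x p = 0) :
    Matrix.vecMul x W p = 0 := by
  rw [Matrix.vecMul, dotProduct]
  rw [Finset.sum_eq_single p]
  · rw [hcol, if_pos rfl, hx, zero_mul]
  · intro k _ hk
    rw [hcol, if_neg hk, mul_zero]
  · simp

lemma mulVec_p {W : Matrix (Fin (m + 1)) (Fin (m + 1)) R}
    (hrow : ∀ j, W p j = if p = j then 1 else 0) {x : Fin (m + 1) → R} (hx : x p = 0) :
    Matrix.mulVec W x p = 0 := by
  rw [Matrix.mulVec, dotProduct]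
  rw [Finset.sum_eq_single p]
  · rw [hrow, if_pos rfl, one_mul, hx]
  · intro k _ hk
    rw [hrow, if_neg (fun hc => hk hc.symm), zero_mul]
  · simp

lemma zr_swap {W : Matrix (Fin (m + 1)) (Fin (m + 1)) R}
    (hcol : ∀ i, W i p = if i = p then 1 else 0) (x : Fin (m + 1) → R) :
    zr p x * W = W * zr p (Matrix.vecMul x W) := by
  rw [zr, zr, add_mul, one_mul, mul_add, mul_one, zrd_mul_W, W_mul_zrd p hcol]

lemma zc_swap {W : Matrix (Fin (m + 1)) (Fin (m + 1)) R}
    (hrow : ∀ j, W p j = if p = j then 1 else 0) (x : Fin (m + 1) → R) :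
    W * zc p x = zc p (Matrix.mulVec W x) * W := by
  rw [zc, zc, add_mul, one_mul, mul_add, mul_one, W_mul_zcd, zcd_mul_W p hrow]

lemma zr_dec {b : Bool} {V : Matrix (Fin (m + 1)) (Fin (m + 1)) R} (hV : Tri b V)
    (hcol : ∀ i, V i p = if i = p then 1 else 0) :
    ∃ W x, Tri b W ∧ (∀ j, W p j = if p = j then 1 else 0) ∧
      (∀ i, W i p = if i = p then 1 else 0) ∧ x p = 0 ∧ V = W * zr p x := by
  set W : Matrix (Fin (m + 1)) (Fin (m + 1)) R :=
    Matrix.of fun i j => if i = p then (if j = p then 1 else 0) else V i j with hW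
  set x : Fin (m + 1) → R := fun j => if j = p then 0 else V p j with hx
  have hVpp : V p p = 1 := by have := hcol p; rwa [if_pos rfl] at this
  have hWrow : ∀ j, W p j = if p = j then 1 else 0 := by
    intro j
    by_cases hj : j = p
    · rw [hW, Matrix.of_apply, if_pos rfl, if_pos hj, if_pos (hj ▸ rfl : p = j)]
    · rw [hW, Matrix.of_apply, if_pos rfl, if_neg hj, if_neg (fun hc : p = j => hj hc.symm)]
  have hWcol : ∀ i, W i p = if i = p then 1 else 0 := by
    intro i
    by_cases hi : i = p
    · rw [hW, Matrix.of_apply, if_pos hi, if_pos rfl, if_pos hi]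
    · rw [hW, Matrix.of_apply, if_neg hi, hcol i]
  have htri : Tri b W := by
    cases b
    · refine ⟨fun i => by by_cases hi : i = p <;> simp [hW, hi, tri_diag hV i], ?_⟩
      intro i j hij
      by_cases hi : i = p
      · simp [hW, hi, show ¬(j = p) from fun hc => (absurd (hi ▸ hc ▸ hij) (lt_irrefl _))]
      · simp [hW, hi, hV.2 i j hij]
    · refine ⟨fun i => by by_cases hi : i = p <;> simp [hW, hi, tri_diag hV i], ?_⟩
      intro i j hij
      by_cases hi : i = p
      · simp [hW, hi, show ¬(j = p) from fun hc => (absurd (hi ▸ hc ▸ hij) (lt_irrefl _))]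
      · simp [hW, hi, hV.2 i j hij]
  refine ⟨W, x, htri, hWrow, hWcol, by simp [hx], ?_⟩
  rw [zr, mul_add, mul_one, W_mul_zrd p hWcol]
  ext i j
  rw [Matrix.add_apply]
  by_cases hi : i = p
  · by_cases hj : j = p
    · rw [hi, hj, hVpp]
      simp [hW, hx, zrd]
    · rw [hi]
      simp [hW, hx, zrd, hj]
  · simp [hW, hx, zrd, hi]

lemma zc_dec {b : Bool} {V : Matrix (Fin (m + 1)) (Fin (m + 1)) R} (hV : Tri b V)
    (hrow : ∀ j, V p j = if p = j then 1 else 0) :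
    ∃ W x, Tri b W ∧ (∀ j, W p j = if p = j then 1 else 0) ∧
      (∀ i, W i p = if i = p then 1 else 0) ∧ x p = 0 ∧ V = zc p x * W := by
  set W : Matrix (Fin (m + 1)) (Fin (m + 1)) R :=
    Matrix.of fun i j => if j = p then (if i = p then 1 else 0) else V i j with hW
  set x : Fin (m + 1) → R := fun i => if i = p then 0 else V i p with hx
  have hVpp : V p p = 1 := by have := hrow p; rwa [if_pos rfl] at this
  have hWrow : ∀ j, W p j = if p = j then 1 else 0 := by
    intro j
    by_cases hj : j = p
    · rw [hW, Matrix.of_apply, if_pos hj, if_pos rfl, if_pos (hj ▸ rfl : p = j)]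
    · rw [hW, Matrix.of_apply, if_neg hj, hrow j]
  have hWcol : ∀ i, W i p = if i = p then 1 else 0 := by
    intro i
    rw [hW, Matrix.of_apply, if_pos rfl]
  have htri : Tri b W := by
    cases b
    · refine ⟨fun i => by by_cases hi : i = p <;> simp [hW, hi, tri_diag hV i], ?_⟩
      intro i j hij
      by_cases hj : j = p
      · simp [hW, hj, show ¬(i = p) from fun hc => (absurd (hj ▸ hc ▸ hij) (lt_irrefl _))]
      · simp [hW, hj, hV.2 i j hij]
    · refine ⟨fun i => by by_cases hi : i = p <;> simp [hW, hi, tri_diag hV i], ?_⟩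
      intro i j hij
      by_cases hj : j = p
      · simp [hW, hj, show ¬(i = p) from fun hc => (absurd (hj ▸ hc ▸ hij) (lt_irrefl _))]
      · simp [hW, hj, hV.2 i j hij]
  refine ⟨W, x, htri, hWrow, hWcol, by simp [hx], ?_⟩
  rw [zc, add_mul, one_mul, zcd_mul_W p hWrow]
  ext i j
  rw [Matrix.add_apply]
  by_cases hj : j = p
  · by_cases hi : i = p
    · rw [hi, hj, hVpp]
      simp [hW, hx, zcd]
    · rw [hj]
      simp [hW, hx, zcd, hi]
  · simp [hW, hx, zcd, hj]

end Z

section GE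

variable {m : ℕ} (p : Fin (m + 1))

lemma memElemGroup_of_elementary {k : ℕ} {M : Matrix (Fin k) (Fin k) R}
    (h : IsElementary M) : MemElemGroup M :=
  ⟨[M], by simpa using h, by simp⟩

lemma stdBasis_eq_zcd (it : Fin (m + 1)) (c : R) :
    (Matrix.single it p c : Matrix (Fin (m + 1)) (Fin (m + 1)) R) =
      zcd p (Pi.single it c) := by
  ext i j
  rw [Matrix.single, zcd]
  simp only [Matrix.of_apply, Pi.single_apply]
  by_cases hj : j = p
  · by_cases hi : i = it
    · rw [if_pos ⟨hi.symm, hj.symm⟩, if_pos hj, if_pos hi]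
    · rw [if_neg (fun hc : it = i ∧ p = j => hi hc.1.symm), if_pos hj, if_neg hi]
  · rw [if_neg (fun hc : it = i ∧ p = j => hj hc.2.symm), if_neg hj]

lemma stdBasis_eq_zrd (jt : Fin (m + 1)) (c : R) :
    (Matrix.single p jt c : Matrix (Fin (m + 1)) (Fin (m + 1)) R) =
      zrd p (Pi.single jt c) := by
  ext i j
  rw [Matrix.single, zrd]
  simp only [Matrix.of_apply, Pi.single_apply]
  by_cases hi : i = p
  · by_cases hj : j = jt
    · rw [if_pos ⟨hi.symm, hj.symm⟩, if_pos hi, if_pos hj]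
    · rw [if_neg (fun hc : p = i ∧ jt = j => hj hc.2.symm), if_pos hi, if_neg hj]
  · rw [if_neg (fun hc : p = i ∧ jt = j => hi hc.1.symm), if_neg hi]

lemma zc_memElem_aux : ∀ (t : ℕ) (x : Fin (m + 1) → R), x p = 0 →
    (∀ i : Fin (m + 1), t ≤ i.1 → x i = 0) → MemElemGroup (zc p x) := by
  intro t
  induction t with
  | zero =>
    intro x hxp h2
    have : x = 0 := funext fun i => h2 i (Nat.zero_le _)
    rw [this, zc_zero]
    exact memElemGroup_one
  | succ t ih =>
    intro x hxp h2
    by_cases ht : t < m + 1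
    · set it : Fin (m + 1) := ⟨t, ht⟩ with hit_def
      set x' := Function.update x it 0 with hx'
      have hx'p : x' p = 0 := by
        rw [hx', Function.update_apply]
        by_cases hp : p = it <;> simp [hp, hxp]
      have h2' : ∀ i : Fin (m + 1), t ≤ i.1 → x' i = 0 := by
        intro i hi
        by_cases hieq : i = it
        · rw [hieq, hx', Function.update_self]
        · rw [hx', Function.update_of_ne hieq]
          refine h2 i ?_
          rcases Nat.lt_or_ge i.1 (t + 1) with hlt | hge
          · exact absurd (Fin.ext (Nat.le_antisymm (Nat.lt_succ_iff.1 hlt) hi)) hieq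
          · exact hge
      have hmem' := ih x' hx'p h2'
      have hsum : Pi.single it (x it) + x' = x := by
        funext i
        by_cases hieq : i = it
        · rw [hieq]
          simp [hx']
        · simp [hx', Function.update_of_ne hieq, Pi.single_apply, hieq]
      by_cases hitp : it = p
      · have : x' = x := by
          funext i
          rw [hx', Function.update_apply]
          by_cases hieq : i = it
          · rw [if_pos hieq, hieq, hitp, hxp]
          · rw [if_neg hieq]
        rwa [← this]
      · have hsing : (Pi.single it (x it) : Fin (m + 1) → R) p = 0 := by
          rw [Pi.single_apply, if_neg (fun hc : p = it => hitp hc.symm)]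
        have key : zc p x = zc p (Pi.single it (x it)) * zc p x' := by
          rw [zc_mul p _ hx'p, hsum]
        rw [key]
        refine memElemGroup_mul (memElemGroup_of_elementary ?_) hmem'
        exact ⟨it, p, x it, hitp, by rw [zc, stdBasis_eq_zcd]⟩
    · refine ih x hxp ?_
      intro i hi
      exact absurd (lt_of_le_of_lt hi i.isLt) (by omega)

lemma zr_memElem_aux : ∀ (t : ℕ) (x : Fin (m + 1) → R), x p = 0 →
    (∀ i : Fin (m + 1), t ≤ i.1 → x i = 0) → MemElemGroup (zr p x) := by
  intro t
  induction t with
  | zero =>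
    intro x hxp h2
    have : x = 0 := funext fun i => h2 i (Nat.zero_le _)
    rw [this, zr_zero]
    exact memElemGroup_one
  | succ t ih =>
    intro x hxp h2
    by_cases ht : t < m + 1
    · set it : Fin (m + 1) := ⟨t, ht⟩ with hit_def
      set x' := Function.update x it 0 with hx'
      have hx'p : x' p = 0 := by
        rw [hx', Function.update_apply]
        by_cases hp : p = it <;> simp [hp, hxp]
      have h2' : ∀ i : Fin (m + 1), t ≤ i.1 → x' i = 0 := by
        intro i hi
        by_cases hieq : i = it
        · rw [hieq, hx', Function.update_self]
        · rw [hx', Function.update_of_ne hieq]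
          refine h2 i ?_
          rcases Nat.lt_or_ge i.1 (t + 1) with hlt | hge
          · exact absurd (Fin.ext (Nat.le_antisymm (Nat.lt_succ_iff.1 hlt) hi)) hieq
          · exact hge
      have hmem' := ih x' hx'p h2'
      have hsum : Pi.single it (x it) + x' = x := by
        funext i
        by_cases hieq : i = it
        · rw [hieq]
          simp [hx']
        · simp [hx', Function.update_of_ne hieq, Pi.single_apply, hieq]
      by_cases hitp : it = p
      · have : x' = x := by
          funext i
          rw [hx', Function.update_apply]
          by_cases hieq : i = it
          · rw [if_pos hieq, hieq, hitp, hxp]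
          · rw [if_neg hieq]
        rwa [← this]
      · have hsing : (Pi.single it (x it) : Fin (m + 1) → R) p = 0 := by
          rw [Pi.single_apply, if_neg (fun hc : p = it => hitp hc.symm)]
        have key : zr p x = zr p (Pi.single it (x it)) * zr p x' := by
          rw [zr_mul p hsing, hsum]
        rw [key]
        refine memElemGroup_mul (memElemGroup_of_elementary ?_) hmem'
        exact ⟨p, it, x it, fun hc => hitp hc.symm, by rw [zr, stdBasis_eq_zrd]⟩
    · refine ih x hxp ?_
      intro i hi
      exact absurd (lt_of_le_of_lt hi i.isLt) (by omega)

lemma zc_memElem {x : Fin (m + 1) → R} (hx : x p = 0) : MemElemGroup (zc p x) :=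
  zc_memElem_aux p (m + 1) x hx (fun i hi => absurd i.isLt (by omega))

lemma zr_memElem {x : Fin (m + 1) → R} (hx : x p = 0) : MemElemGroup (zr p x) :=
  zr_memElem_aux p (m + 1) x hx (fun i hi => absurd i.isLt (by omega))

end GE

lemma tri_memElem : ∀ {k : ℕ} {b : Bool} {M : Matrix (Fin k) (Fin k) R},
    Tri b M → MemElemGroup M := by
  intro k
  induction k with
  | zero =>
    intro b M _
    have : M = 1 := by ext i j; exact i.elim0
    rw [this]
    exact memElemGroup_one
  | succ k ih =>
    intro b M hM
    cases b
    · -- upper unitriangular: column 0 is trivial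
      have hcol : ∀ i : Fin (k + 1), M i 0 = if i = 0 then 1 else 0 := by
        intro i
        by_cases hi : i = 0
        · rw [hi, if_pos rfl]; exact tri_diag hM 0
        · rw [if_neg hi]; exact hM.2 i 0 (Fin.pos_of_ne_zero hi)
      obtain ⟨W, x, hWt, hWr, hWc, hxp, rfl⟩ := zr_dec 0 hM hcol
      refine memElemGroup_mul ?_ (zr_memElem 0 hxp)
      rw [← emb_strip (p := 0) hWr hWc]
      exact memElemGroup_emb 0 (ih (tri_strip 0 hWt))
    · -- lower unitriangular: row 0 is trivial
      have hrow : ∀ j : Fin (k + 1), M 0 j = if (0 : Fin (k + 1)) = j then 1 else 0 := by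
        intro j
        by_cases hj : j = 0
        · rw [hj, if_pos rfl]; exact tri_diag hM 0
        · rw [if_neg (fun hc : (0 : Fin (k + 1)) = j => hj hc.symm)]
          exact hM.2 0 j (Fin.pos_of_ne_zero hj)
      obtain ⟨W, x, hWt, hWr, hWc, hxp, rfl⟩ := zc_dec 0 hM hrow
      refine memElemGroup_mul (zc_memElem 0 hxp) ?_
      rw [← emb_strip (p := 0) hWr hWc]
      exact memElemGroup_emb 0 (ih (tri_strip 0 hWt))

lemma tri_isUnit {k : ℕ} {b : Bool} {M : Matrix (Fin k) (Fin k) R}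
    (hM : Tri b M) : IsUnit M := memElemGroup_isUnit (tri_memElem hM)

section UnitsLevel

variable {m : ℕ} (p : Fin (m + 1))

/-- A unit whose value is a Z matrix of type `s`. -/
def NZ (s : Bool) (z : (Matrix (Fin (m + 1)) (Fin (m + 1)) R)ˣ) : Prop :=
  ∃ x, x p = 0 ∧ (z : Matrix (Fin (m + 1)) (Fin (m + 1)) R) = zOf p s x

lemma nz_conj (w : (Matrix (Fin m) (Fin m) R)ˣ) {s : Bool}
    {z : (Matrix (Fin (m + 1)) (Fin (m + 1)) R)ˣ} (hz : NZ p s z) :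
    NZ p s ((embU p w)⁻¹ * z * embU p w) := by
  obtain ⟨x, hxp, hzv⟩ := hz
  have hval : ((embU p w)⁻¹ * z * embU p w).val
      = emb p (↑w⁻¹ : Matrix (Fin m) (Fin m) R) * z.val * emb p (↑w : Matrix (Fin m) (Fin m) R) := by
    rw [embU_inv]
    rfl
  have hone : emb p (↑w⁻¹ : Matrix (Fin m) (Fin m) R) * emb p (↑w : Matrix (Fin m) (Fin m) R) = 1 := by
    rw [← emb_mul, Units.inv_mul, emb_one]
  cases s
  · -- column type
    refine ⟨Matrix.mulVec (emb p (↑w⁻¹ : Matrix (Fin m) (Fin m) R)) x,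
      mulVec_p p (emb_row_p p _) hxp, ?_⟩
    have hswap := zc_swap p (emb_row_p p (↑w⁻¹ : Matrix (Fin m) (Fin m) R)) x
    rw [hval, hzv]
    show emb p _ * zc p x * emb p _ = zc p _
    rw [hswap, mul_assoc, hone, mul_one]
  · -- row type
    refine ⟨Matrix.vecMul x (emb p (↑w : Matrix (Fin m) (Fin m) R)),
      vecMul_p p (emb_col_p p _) hxp, ?_⟩
    have hswap := zr_swap p (emb_col_p p (↑w : Matrix (Fin m) (Fin m) R)) x
    rw [hval, hzv]
    show emb p _ * zr p x * emb p _ = zr p _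
    rw [mul_assoc, hswap, ← mul_assoc, hone, one_mul]

lemma udec_r {b : Bool} (u : (Matrix (Fin (m + 1)) (Fin (m + 1)) R)ˣ)
    (hu : Tri b (u.val)) (hcol : ∀ i, u.val i p = if i = p then 1 else 0) :
    ∃ (w : (Matrix (Fin m) (Fin m) R)ˣ) (z : (Matrix (Fin (m + 1)) (Fin (m + 1)) R)ˣ),
      Tri b (w.val) ∧ NZ p true z ∧ u = embU p w * z := by
  obtain ⟨W, x, hWt, hWr, hWc, hxp, hprod⟩ := zr_dec p hu hcol
  have hsW : Tri b (strip p W) := tri_strip p hWt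
  have hwu := tri_isUnit hsW
  refine ⟨hwu.unit, zrU p x hxp, by rw [IsUnit.unit_spec]; exact hsW, ⟨x, hxp, rfl⟩, ?_⟩
  apply Units.ext
  rw [hprod]
  show W * zr p x = emb p (hwu.unit).val * (zrU p x hxp).val
  rw [IsUnit.unit_spec, emb_strip p hWr hWc]
  rfl

lemma udec_c {b : Bool} (u : (Matrix (Fin (m + 1)) (Fin (m + 1)) R)ˣ)
    (hu : Tri b (u.val)) (hrow : ∀ j, u.val p j = if p = j then 1 else 0) :
    ∃ (w : (Matrix (Fin m) (Fin m) R)ˣ) (z : (Matrix (Fin (m + 1)) (Fin (m + 1)) R)ˣ),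
      Tri b (w.val) ∧ NZ p false z ∧ u = embU p w * z := by
  obtain ⟨W, x, hWt, hWr, hWc, hxp, hprod⟩ := zc_dec p hu hrow
  have hsW : Tri b (strip p W) := tri_strip p hWt
  have hwu := tri_isUnit hsW
  have hu_eq : u = zcU p x hxp * embU p hwu.unit := by
    apply Units.ext
    rw [hprod]
    show zc p x * W = (zcU p x hxp).val * emb p (hwu.unit).val
    rw [IsUnit.unit_spec, emb_strip p hWr hWc]
    rfl
  refine ⟨hwu.unit, (embU p hwu.unit)⁻¹ * zcU p x hxp * embU p hwu.unit,
    by rw [IsUnit.unit_spec]; exact hsW, nz_conj p _ ⟨x, hxp, rfl⟩, ?_⟩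
  rw [hu_eq]
  group

end UnitsLevel

section AbstractGroup

variable {G : Type*} [Group G]

lemma prod_conj {L : ℕ} (v : G) (z : Fin L → G) :
    v⁻¹ * (List.ofFn z).prod * v = (List.ofFn fun k => v⁻¹ * z k * v).prod := by
  calc v⁻¹ * (List.ofFn z).prod * v
      = (MulAut.conj v⁻¹) (List.ofFn z).prod := by simp [MulAut.conj_apply, mul_assoc]
    _ = ((List.ofFn z).map (MulAut.conj v⁻¹)).prod := map_list_prod _ _
    _ = (List.ofFn fun k => v⁻¹ * z k * v).prod := by
        rw [List.map_ofFn]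
        have : (⇑(MulAut.conj v⁻¹) ∘ z) = fun k => v⁻¹ * z k * v :=
          funext fun k => by simp [MulAut.conj_apply, mul_assoc]
        rw [this]

lemma mem_prod_ofFn {L : ℕ} (H : Subgroup G) (e : Fin L → G) (he : ∀ k, e k ∈ H) :
    (List.ofFn e).prod ∈ H := by
  refine list_prod_mem ?_
  intro x hx
  rw [List.mem_ofFn] at hx
  obtain ⟨k, rfl⟩ := hx
  exact he k

lemma collect_lemma (H : Subgroup G) :
    ∀ (L : ℕ) (N : Fin L → G → Prop),
      (∀ (a : G) (k : Fin L) (z : G), a ∈ H → N k z → N k (a⁻¹ * z * a)) →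
      ∀ (e z : Fin L → G), (∀ k, e k ∈ H) → (∀ k, N k (z k)) →
      ∃ z' : Fin L → G, (∀ k, N k (z' k)) ∧
        (List.ofFn fun k => e k * z k).prod = (List.ofFn e).prod * (List.ofFn z').prod := by
  intro L
  induction L with
  | zero =>
    intro N _ e z _ _
    exact ⟨Fin.elim0, fun k => k.elim0, by simp⟩
  | succ L ih =>
    intro N hN e z he hz
    obtain ⟨z', hz', hp⟩ := ih (fun k => N k.succ) (fun a k => hN a k.succ)
      (fun k => e k.succ) (fun k => z k.succ) (fun k => he k.succ) (fun k => hz k.succ)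
    set Es := (List.ofFn fun k : Fin L => e k.succ).prod with hEs
    have hEsH : Es ∈ H := mem_prod_ofFn H _ (fun k => he k.succ)
    refine ⟨Fin.cases (Es⁻¹ * z 0 * Es) z', ?_, ?_⟩
    · intro k
      refine Fin.cases ?_ ?_ k
      · simpa using hN Es 0 (z 0) hEsH (hz 0)
      · intro k'
        simpa using hz' k'
    · rw [List.ofFn_succ, List.ofFn_succ (f := e),
        List.ofFn_succ (f := Fin.cases (Es⁻¹ * z 0 * Es) z'), List.prod_cons, List.prod_cons,
        List.prod_cons]
      simp only [Fin.cases_zero, Fin.cases_succ]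
      rw [hp, ← hEs]
      group

lemma distribute_lemma (H : Subgroup G) :
    ∀ (L : ℕ) (N : Fin L → G → Prop),
      (∀ (a : G) (k : Fin L) (z : G), a ∈ H → N k z → N k (a⁻¹ * z * a)) →
      ∀ (e z : Fin L → G), (∀ k, e k ∈ H) → (∀ k, N k (z k)) →
      ∃ z' : Fin L → G, (∀ k, N k (z' k)) ∧
        (List.ofFn e).prod * (List.ofFn z).prod = (List.ofFn fun k => e k * z' k).prod := by
  intro L
  induction L with
  | zero =>
    intro N _ e z _ _
    exact ⟨Fin.elim0, fun k => k.elim0, by simp⟩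
  | succ L ih =>
    intro N hN e z he hz
    obtain ⟨z', hz', hp⟩ := ih (fun k => N k.succ) (fun a k => hN a k.succ)
      (fun k => e k.succ) (fun k => z k.succ) (fun k => he k.succ) (fun k => hz k.succ)
    set Es := (List.ofFn fun k : Fin L => e k.succ).prod with hEs
    have hEsH : Es ∈ H := mem_prod_ofFn H _ (fun k => he k.succ)
    refine ⟨Fin.cases (Es * z 0 * Es⁻¹) z', ?_, ?_⟩
    · intro k
      refine Fin.cases ?_ ?_ k
      · simpa using hN Es⁻¹ 0 (z 0) (H.inv_mem hEsH) (hz 0)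
      · intro k'
        simpa using hz' k'
    · rw [List.ofFn_succ (f := e), List.ofFn_succ (f := z),
        List.ofFn_succ (f := fun k => e k * Fin.cases (Es * z 0 * Es⁻¹) z' k), List.prod_cons,
        List.prod_cons, List.prod_cons]
      simp only [Fin.cases_zero, Fin.cases_succ]
      rw [← hEs, ← hp]
      group

end AbstractGroup

lemma memElemGroup_list {k : ℕ} (l : List (Matrix (Fin k) (Fin k) R))
    (hl : ∀ A ∈ l, MemElemGroup A) : MemElemGroup l.prod := by
  induction l with
  | nil => exact memElemGroup_one
  | cons a t ih =>
    rw [List.prod_cons]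
    exact memElemGroup_mul (hl a (List.mem_cons_self))
      (ih (fun A hA => hl A (List.mem_cons_of_mem a hA)))

/-- Factorization pattern: factor `k` should be lower unitriangular iff `k` is even. -/
def pat (L : ℕ) (k : Fin L) : Bool := decide (k.1 % 2 = 0)

/-- Units-level alternating factorization. -/
def UFact {n : ℕ} (L : ℕ) (u : (Matrix (Fin n) (Fin n) R)ˣ) : Prop :=
  ∃ f : Fin L → (Matrix (Fin n) (Fin n) R)ˣ,
    (∀ k, Tri (pat L k) ((f k).val)) ∧ (List.ofFn f).prod = u

section StepB

variable {m : ℕ} (p : Fin (m + 1)) (sd : Bool → Bool)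

theorem stepB (L : ℕ)
    (hzt : ∀ (b : Bool) (x : Fin (m + 1) → R), x p = 0 → Tri b (zOf p (sd b) x))
    (hdec : ∀ (b : Bool) (u : (Matrix (Fin (m + 1)) (Fin (m + 1)) R)ˣ), Tri b u.val →
      ∃ (w : (Matrix (Fin m) (Fin m) R)ˣ) (z : (Matrix (Fin (m + 1)) (Fin (m + 1)) R)ˣ),
        Tri b (w.val) ∧ NZ p (sd b) z ∧ u = embU p w * z)
    (h' : ∀ Msmall : Matrix (Fin m) (Fin m) R, MemElemGroup Msmall →
      HasAltUnitriangularFactorization L Msmall)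
    (u : (Matrix (Fin (m + 1)) (Fin (m + 1)) R)ˣ) (hu : UFact L u)
    (g : (Matrix (Fin m) (Fin m) R)ˣ) (hg : MemElemGroup (g.val)) :
    UFact L (u * embU p g) := by
  obtain ⟨f, hf, hfp⟩ := hu
  choose w z hw hz hfactor using fun k => hdec (pat L k) (f k) (hf k)
  have hconjN : ∀ (a : (Matrix (Fin (m + 1)) (Fin (m + 1)) R)ˣ) (k : Fin L)
      (zz : (Matrix (Fin (m + 1)) (Fin (m + 1)) R)ˣ), a ∈ (embU p (R := R)).range →
      NZ p (sd (pat L k)) zz → NZ p (sd (pat L k)) (a⁻¹ * zz * a) := by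
    rintro a k zz ⟨wa, rfl⟩ hzz
    exact nz_conj p wa hzz
  obtain ⟨z1, hz1, hcol⟩ := collect_lemma (embU p (R := R)).range L
    (fun k => NZ p (sd (pat L k))) hconjN (fun k => embU p (w k)) z
    (fun k => ⟨w k, rfl⟩) hz
  have hfp2 : (List.ofFn f).prod = (List.ofFn fun k => embU p (w k) * z k).prod := by
    have : f = fun k => embU p (w k) * z k := funext hfactor
    rw [this]
  set Wp : (Matrix (Fin m) (Fin m) R)ˣ := (List.ofFn w).prod with hWp
  have hEprod : (List.ofFn fun k => embU p (w k)).prod = embU p Wp := by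
    rw [hWp, map_list_prod (embU p) (List.ofFn w), List.map_ofFn]
    rfl
  set z2 : Fin L → (Matrix (Fin (m + 1)) (Fin (m + 1)) R)ˣ :=
    fun k => (embU p g)⁻¹ * z1 k * embU p g with hz2def
  have hz2 : ∀ k, NZ p (sd (pat L k)) (z2 k) := fun k => nz_conj p g (hz1 k)
  have hWpmem : MemElemGroup ((Wp * g).val) := by
    rw [Units.val_mul]
    refine memElemGroup_mul ?_ hg
    have hval : (Wp.val) = (List.ofFn fun k => (w k).val).prod := by
      rw [hWp]
      calc ((List.ofFn w).prod).val
          = ((List.ofFn w).map (Units.coeHom (Matrix (Fin m) (Fin m) R))).prod :=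
            map_list_prod (Units.coeHom (Matrix (Fin m) (Fin m) R)) (List.ofFn w)
        _ = (List.ofFn fun k => (w k).val).prod := by rw [List.map_ofFn]; rfl
    rw [hval]
    refine memElemGroup_list _ ?_
    intro A hA
    rw [List.mem_ofFn] at hA
    obtain ⟨k, rfl⟩ := hA
    exact tri_memElem (hw k)
  obtain ⟨c', hc', hcp⟩ := h' ((Wp * g).val) hWpmem
  have hc'tri : ∀ k, Tri (pat L k) (c' k) := fun k => tri_of_if (hc' k)
  set c : Fin L → (Matrix (Fin m) (Fin m) R)ˣ := fun k => (tri_isUnit (hc'tri k)).unit with hcdef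
  have hcval : ∀ k, (c k).val = c' k := fun k => IsUnit.unit_spec _
  have hcprod : (List.ofFn c).prod = Wp * g := by
    apply Units.ext
    have h1 : ((List.ofFn c).prod).val = (List.ofFn fun k => (c k).val).prod := by
      calc ((List.ofFn c).prod).val
          = ((List.ofFn c).map (Units.coeHom (Matrix (Fin m) (Fin m) R))).prod :=
            map_list_prod (Units.coeHom (Matrix (Fin m) (Fin m) R)) (List.ofFn c)
        _ = (List.ofFn fun k => (c k).val).prod := by rw [List.map_ofFn]; rfl
    have h2 : (fun k => (c k).val) = c' := funext hcval
    rw [h1, h2, hcp]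
  obtain ⟨z3, hz3, hdist⟩ := distribute_lemma (embU p (R := R)).range L
    (fun k => NZ p (sd (pat L k))) hconjN (fun k => embU p (c k)) z2
    (fun k => ⟨c k, rfl⟩) hz2
  refine ⟨fun k => embU p (c k) * z3 k, ?_, ?_⟩
  · intro k
    obtain ⟨x, hxp, hxv⟩ := hz3 k
    have hval : ((embU p (c k) * z3 k).val) = emb p ((c k).val) * zOf p (sd (pat L k)) x := by
      rw [Units.val_mul, hxv]
      rfl
    rw [hval]
    exact tri_mul (tri_emb p (by rw [hcval]; exact hc'tri k)) (hzt _ x hxp)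
  · have hEprodC : (List.ofFn fun k => embU p (c k)).prod = embU p (Wp * g) := by
      rw [← hcprod, map_list_prod (embU p) (List.ofFn c), List.map_ofFn]
      rfl
    have hZ2prod : (List.ofFn z2).prod = (embU p g)⁻¹ * (List.ofFn z1).prod * embU p g :=
      (prod_conj (embU p g) z1).symm
    calc (List.ofFn fun k => embU p (c k) * z3 k).prod
        = (List.ofFn fun k => embU p (c k)).prod * (List.ofFn z2).prod := hdist.symm
      _ = embU p (Wp * g) * ((embU p g)⁻¹ * (List.ofFn z1).prod * embU p g) := by
          rw [hEprodC, hZ2prod]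
      _ = embU p Wp * (List.ofFn z1).prod * embU p g := by
          rw [MonoidHom.map_mul (embU p) Wp g]
          group
      _ = (List.ofFn fun k => embU p (w k)).prod * (List.ofFn z1).prod * embU p g := by
          rw [hEprod]
      _ = (List.ofFn f).prod * embU p g := by rw [← hcol, ← hfp2]
      _ = u * embU p g := by rw [hfp]

end StepB

section Instantiations

variable {m : ℕ}

lemma nlt_zero (j : Fin (m + 1)) : ¬ j < (0 : Fin (m + 1)) := by
  simp [Fin.lt_def]

lemma nlt_last (j : Fin (m + 1)) : ¬ (Fin.last m) < j := by
  simp [Fin.lt_def, Fin.le_def]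
  omega

lemma zr_diag (p : Fin (m + 1)) {x : Fin (m + 1) → R} (hx : x p = 0) (i : Fin (m + 1)) :
    zr p x i i = 1 := by
  by_cases hi : i = p
  · rw [hi]
    simp [zr, zrd, Matrix.add_apply, Matrix.one_apply, hx]
  · simp [zr, zrd, Matrix.add_apply, Matrix.one_apply, hi]

lemma zc_diag (p : Fin (m + 1)) {x : Fin (m + 1) → R} (hx : x p = 0) (i : Fin (m + 1)) :
    zc p x i i = 1 := by
  by_cases hi : i = p
  · rw [hi]
    simp [zc, zcd, Matrix.add_apply, Matrix.one_apply, hx]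
  · simp [zc, zcd, Matrix.add_apply, Matrix.one_apply, hi]

lemma zr_off (p : Fin (m + 1)) (x : Fin (m + 1) → R) {i j : Fin (m + 1)}
    (hij : i ≠ j) (hi : i ≠ p) : zr p x i j = 0 := by
  simp [zr, zrd, Matrix.add_apply, Matrix.one_apply_ne hij, hi]

lemma zc_off (p : Fin (m + 1)) (x : Fin (m + 1) → R) {i j : Fin (m + 1)}
    (hij : i ≠ j) (hj : j ≠ p) : zc p x i j = 0 := by
  simp [zc, zcd, Matrix.add_apply, Matrix.one_apply_ne hij, hj]

lemma hzt0 : ∀ (b : Bool) (x : Fin (m + 1) → R), x 0 = 0 → Tri b (zOf 0 (!b) x) := by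
  intro b x hx
  cases b
  · -- upper, zr 0
    exact ⟨zr_diag 0 hx, fun i j hij =>
      zr_off 0 x (ne_of_gt hij) (fun hc => nlt_zero j (hc ▸ hij))⟩
  · -- lower, zc 0
    exact ⟨zc_diag 0 hx, fun i j hij =>
      zc_off 0 x (ne_of_lt hij) (fun hc => nlt_zero i (hc ▸ hij))⟩

lemma hztL : ∀ (b : Bool) (x : Fin (m + 1) → R), x (Fin.last m) = 0 →
    Tri b (zOf (Fin.last m) (id b) x) := by
  intro b x hx
  cases b
  · -- upper, zc last
    exact ⟨zc_diag _ hx, fun i j hij =>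
      zc_off _ x (ne_of_gt hij) (fun hc => nlt_last i (hc ▸ hij))⟩
  · -- lower, zr last
    exact ⟨zr_diag _ hx, fun i j hij =>
      zr_off _ x (ne_of_lt hij) (fun hc => nlt_last j (hc ▸ hij))⟩

lemma hdec0 : ∀ (b : Bool) (u : (Matrix (Fin (m + 1)) (Fin (m + 1)) R)ˣ), Tri b u.val →
    ∃ (w : (Matrix (Fin m) (Fin m) R)ˣ) (z : (Matrix (Fin (m + 1)) (Fin (m + 1)) R)ˣ),
      Tri b (w.val) ∧ NZ 0 (!b) z ∧ u = embU 0 w * z := by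
  intro b u hu
  cases b
  · -- upper
    refine udec_r 0 u hu ?_
    intro i
    by_cases hi : i = 0
    · rw [if_pos hi, hi]
      exact tri_diag hu 0
    · rw [if_neg hi]
      exact hu.2 i 0 (Fin.pos_of_ne_zero hi)
  · -- lower
    refine udec_c 0 u hu ?_
    intro j
    by_cases hj : j = 0
    · rw [if_pos (hj ▸ rfl : (0 : Fin (m + 1)) = j), hj]
      exact tri_diag hu 0
    · rw [if_neg (fun hc : (0 : Fin (m + 1)) = j => hj hc.symm)]
      exact hu.2 0 j (Fin.pos_of_ne_zero hj)

lemma hdecL : ∀ (b : Bool) (u : (Matrix (Fin (m + 1)) (Fin (m + 1)) R)ˣ), Tri b u.val →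
    ∃ (w : (Matrix (Fin m) (Fin m) R)ˣ) (z : (Matrix (Fin (m + 1)) (Fin (m + 1)) R)ˣ),
      Tri b (w.val) ∧ NZ (Fin.last m) (id b) z ∧ u = embU (Fin.last m) w * z := by
  intro b u hu
  cases b
  · -- upper
    refine udec_c (Fin.last m) u hu ?_
    intro j
    by_cases hj : j = Fin.last m
    · rw [if_pos (hj ▸ rfl : Fin.last m = j), hj]
      exact tri_diag hu _
    · rw [if_neg (fun hc : Fin.last m = j => hj hc.symm)]
      exact hu.2 _ j (lt_of_le_of_ne (Fin.le_last j) hj)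
  · -- lower
    refine udec_r (Fin.last m) u hu ?_
    intro i
    by_cases hi : i = Fin.last m
    · rw [if_pos hi, hi]
      exact tri_diag hu _
    · rw [if_neg hi]
      exact hu.2 i _ (lt_of_le_of_ne (Fin.le_last i) hi)

end Instantiations

section Cover

variable {m : ℕ}

/-- A unit is good if it is the embedding (at the bottom or at the top) of a unit whose
value lies in the small elementary group. -/
def Good (g : (Matrix (Fin (m + 1)) (Fin (m + 1)) R)ˣ) : Prop :=
  (∃ w, MemElemGroup ((w : (Matrix (Fin m) (Fin m) R)ˣ).val) ∧ g = embU 0 w) ∨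
  (∃ w, MemElemGroup ((w : (Matrix (Fin m) (Fin m) R)ˣ).val) ∧ g = embU (Fin.last m) w)

lemma elemUnit_inv {k : ℕ} (i j : Fin k) (hij : i ≠ j) (r : R) :
    (elemUnit i j hij r)⁻¹ = elemUnit i j hij (-r) := by
  apply Units.ext
  rfl

lemma good_elem {i j : Fin (m + 1)} (hij : i ≠ j) (r : R) (p : Fin (m + 1))
    (hp : p = 0 ∨ p = Fin.last m) (hi : i ≠ p) (hj : j ≠ p) : Good (elemUnit i j hij r) := by
  obtain ⟨i', hi'⟩ := Fin.exists_succAbove_eq hi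
  obtain ⟨j', hj'⟩ := Fin.exists_succAbove_eq hj
  have hij' : i' ≠ j' := by
    rintro rfl
    exact hij (hi'.symm.trans hj')
  have key : elemUnit i j hij r = embU p (elemUnit i' j' hij' r) := by
    apply Units.ext
    show 1 + Matrix.single i j r = emb p (1 + Matrix.single i' j' r)
    rw [emb_elementary p i' j' r, hi', hj']
  have hmem : MemElemGroup ((elemUnit i' j' hij' r).val) :=
    memElemGroup_of_elementary ⟨i', j', r, hij', rfl⟩
  rcases hp with rfl | rfl
  · exact Or.inl ⟨elemUnit i' j' hij' r, hmem, key⟩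
  · exact Or.inr ⟨elemUnit i' j' hij' r, hmem, key⟩

lemma corner_eq {k : ℕ} {a b c : Fin k} (hab : a ≠ b) (hbc : b ≠ c) (hac : a ≠ c) (r : R) :
    (1 + Matrix.single a b r) * (1 + Matrix.single b c 1)
      = (1 + Matrix.single a c r) *
        ((1 + Matrix.single b c 1) * (1 + Matrix.single a b r)) := by
  have hba : b ≠ a := Ne.symm hab
  have hcb : c ≠ b := Ne.symm hbc
  have hca : c ≠ a := Ne.symm hac
  have z1 : Matrix.single b c (1 : R) * Matrix.single a b r = 0 :=
    Matrix.single_mul_single_of_ne (c := 1) b c a hca r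
  have z2 : Matrix.single a c r * Matrix.single b c (1 : R) = 0 :=
    Matrix.single_mul_single_of_ne (c := r) a c b hcb 1
  have z3 : Matrix.single a c r * Matrix.single a b r = 0 :=
    Matrix.single_mul_single_of_ne (c := r) a c a hca r
  simp only [mul_add, add_mul, mul_one, one_mul, Matrix.single_mul_single_same,
    z1, z2, z3, mul_zero, add_zero, zero_add]
  abel

lemma corner_units {k : ℕ} {a b c : Fin k} (hab : a ≠ b) (hbc : b ≠ c) (hac : a ≠ c) (r : R) :
    elemUnit a b hab r * (elemUnit b c hbc 1 *
      (elemUnit a b hab (-r) * (elemUnit b c hbc (-1) * 1)))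
      = elemUnit a c hac r := by
  rw [mul_one, ← elemUnit_inv, ← elemUnit_inv]
  have key : elemUnit a b hab r * elemUnit b c hbc 1
      = elemUnit a c hac r * (elemUnit b c hbc 1 * elemUnit a b hab r) := by
    apply Units.ext
    exact corner_eq hab hbc hac r
  calc elemUnit a b hab r * ((elemUnit b c hbc 1) *
        ((elemUnit a b hab r)⁻¹ * (elemUnit b c hbc 1)⁻¹))
      = (elemUnit a b hab r * elemUnit b c hbc 1) *
        ((elemUnit a b hab r)⁻¹ * (elemUnit b c hbc 1)⁻¹) := by group
    _ = (elemUnit a c hac r * (elemUnit b c hbc 1 * elemUnit a b hab r)) *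
        ((elemUnit a b hab r)⁻¹ * (elemUnit b c hbc 1)⁻¹) := by rw [key]
    _ = elemUnit a c hac r := by group

lemma elem_cover (hm : 2 ≤ m) {M : Matrix (Fin (m + 1)) (Fin (m + 1)) R}
    (hM : IsElementary M) :
    ∃ gs : List ((Matrix (Fin (m + 1)) (Fin (m + 1)) R)ˣ),
      (∀ g ∈ gs, Good g) ∧ ((gs.prod).val) = M := by
  obtain ⟨i, j, r, hij, rfl⟩ := hM
  have h0l : (0 : Fin (m + 1)) ≠ Fin.last m := by
    rw [Fin.ne_iff_vne, Fin.val_zero, Fin.val_last]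
    omega
  set mid : Fin (m + 1) := ⟨1, by omega⟩ with hmid
  have hmid0 : mid ≠ 0 := by rw [Fin.ne_iff_vne]; simp [hmid]
  have hmidl : mid ≠ Fin.last m := by
    rw [Fin.ne_iff_vne, Fin.val_last]; simp [hmid]; omega
  by_cases hcorner : (i = 0 ∧ j = Fin.last m) ∨ (i = Fin.last m ∧ j = 0)
  · rcases hcorner with ⟨rfl, rfl⟩ | ⟨rfl, rfl⟩
    · refine ⟨[elemUnit 0 mid (Ne.symm hmid0) r, elemUnit mid (Fin.last m) hmidl 1,
        elemUnit 0 mid (Ne.symm hmid0) (-r), elemUnit mid (Fin.last m) hmidl (-1)], ?_, ?_⟩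
      · intro g hg
        simp only [List.mem_cons, List.not_mem_nil, or_false] at hg
        rcases hg with rfl | rfl | rfl | rfl
        · exact good_elem _ r _ (Or.inr rfl) h0l hmidl
        · exact good_elem _ 1 _ (Or.inl rfl) hmid0 (Ne.symm h0l)
        · exact good_elem _ (-r) _ (Or.inr rfl) h0l hmidl
        · exact good_elem _ (-1) _ (Or.inl rfl) hmid0 (Ne.symm h0l)
      · rw [List.prod_cons, List.prod_cons, List.prod_cons, List.prod_cons, List.prod_nil,
          corner_units (Ne.symm hmid0) hmidl hij r]
        rfl
    · refine ⟨[elemUnit (Fin.last m) mid (Ne.symm hmidl) r, elemUnit mid 0 hmid0 1,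
        elemUnit (Fin.last m) mid (Ne.symm hmidl) (-r), elemUnit mid 0 hmid0 (-1)], ?_, ?_⟩
      · intro g hg
        simp only [List.mem_cons, List.not_mem_nil, or_false] at hg
        rcases hg with rfl | rfl | rfl | rfl
        · exact good_elem _ r _ (Or.inl rfl) (Ne.symm h0l) hmid0
        · exact good_elem _ 1 _ (Or.inr rfl) hmidl h0l
        · exact good_elem _ (-r) _ (Or.inl rfl) (Ne.symm h0l) hmid0
        · exact good_elem _ (-1) _ (Or.inr rfl) hmidl h0l
      · rw [List.prod_cons, List.prod_cons, List.prod_cons, List.prod_cons, List.prod_nil,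
          corner_units (Ne.symm hmidl) hmid0 hij r]
        rfl
  · have hfree : (i ≠ 0 ∧ j ≠ 0) ∨ (i ≠ Fin.last m ∧ j ≠ Fin.last m) := by
      by_cases hi0 : i = 0
      · subst hi0
        by_cases hjl : j = Fin.last m
        · exact absurd (Or.inl ⟨rfl, hjl⟩) hcorner
        · exact Or.inr ⟨h0l, hjl⟩
      · by_cases hj0 : j = 0
        · subst hj0
          by_cases hil : i = Fin.last m
          · exact absurd (Or.inr ⟨hil, rfl⟩) hcorner
          · exact Or.inr ⟨hil, h0l⟩
        · exact Or.inl ⟨hi0, hj0⟩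
    rcases hfree with ⟨hi0, hj0⟩ | ⟨hil, hjl⟩
    · refine ⟨[elemUnit i j hij r], ?_, by simp [elemUnit]⟩
      intro g hg
      simp only [List.mem_cons, List.not_mem_nil, or_false] at hg
      subst hg
      exact good_elem hij r 0 (Or.inl rfl) hi0 hj0
    · refine ⟨[elemUnit i j hij r], ?_, by simp [elemUnit]⟩
      intro g hg
      simp only [List.mem_cons, List.not_mem_nil, or_false] at hg
      subst hg
      exact good_elem hij r (Fin.last m) (Or.inr rfl) hil hjl

lemma list_cover (hm : 2 ≤ m) (l : List (Matrix (Fin (m + 1)) (Fin (m + 1)) R))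
    (hl : ∀ A ∈ l, IsElementary A) :
    ∃ gs : List ((Matrix (Fin (m + 1)) (Fin (m + 1)) R)ˣ),
      (∀ g ∈ gs, Good g) ∧ ((gs.prod).val) = l.prod := by
  induction l with
  | nil => exact ⟨[], by simp, by simp⟩
  | cons A t ih =>
    obtain ⟨gs1, hg1, hv1⟩ := elem_cover hm (hl A (List.mem_cons_self))
    obtain ⟨gs2, hg2, hv2⟩ := ih (fun B hB => hl B (List.mem_cons_of_mem A hB))
    refine ⟨gs1 ++ gs2, ?_, ?_⟩
    · intro g hg
      rcases List.mem_append.1 hg with h | h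
      exacts [hg1 g h, hg2 g h]
    · rw [List.prod_append, List.prod_cons, Units.val_mul, hv1, hv2]

end Cover

section Final

variable {m : ℕ}

lemma ufact_one (L : ℕ) {n : ℕ} : UFact L (1 : (Matrix (Fin n) (Fin n) R)ˣ) := by
  refine ⟨fun _ => 1, fun k => by simpa using tri_one (R := R) (m := n) (pat L k), ?_⟩
  apply List.prod_eq_one
  intro x hx
  rw [List.mem_ofFn] at hx
  obtain ⟨k, rfl⟩ := hx
  rfl

lemma val_ofFn_prod {n L : ℕ} (f : Fin L → (Matrix (Fin n) (Fin n) R)ˣ) :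
    ((List.ofFn f).prod).val = (List.ofFn fun k => (f k).val).prod := by
  calc ((List.ofFn f).prod).val
      = ((List.ofFn f).map (Units.coeHom (Matrix (Fin n) (Fin n) R))).prod :=
        map_list_prod (Units.coeHom (Matrix (Fin n) (Fin n) R)) (List.ofFn f)
    _ = (List.ofFn fun k => (f k).val).prod := by rw [List.map_ofFn]; rfl

lemma ufact_good_list (hm : 2 ≤ m) (L : ℕ)
    (h' : ∀ Msmall : Matrix (Fin m) (Fin m) R, MemElemGroup Msmall →
      HasAltUnitriangularFactorization L Msmall) :
    ∀ gs : List ((Matrix (Fin (m + 1)) (Fin (m + 1)) R)ˣ),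
      (∀ g ∈ gs, Good g) → UFact L gs.prod := by
  intro gs
  induction gs using List.reverseRecOn with
  | nil => intro _; simpa using ufact_one L
  | append_singleton t g ih =>
    intro hgood
    rw [List.prod_append, List.prod_cons, List.prod_nil, mul_one]
    have hu := ih (fun x hx => hgood x (List.mem_append_left _ hx))
    rcases hgood g (List.mem_append_right _ (List.mem_cons_self)) with
      ⟨w, hwmem, rfl⟩ | ⟨w, hwmem, rfl⟩
    · exact stepB 0 (fun b => !b) L hzt0 hdec0 h' _ hu w hwmem
    · exact stepB (Fin.last m) id L hztL hdecL h' _ hu w hwmem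

end Final

end Tavgen

/-- Tavgen reduction for the root system `A_{n-1}`: if every matrix in `E_{n-1}(R)` is a
product of `L` alternately lower/upper unitriangular matrices (starting lower), then so is
every matrix in `E_n(R)`. -/
theorem stmt1 {R : Type*} [CommRing R] (n : ℕ) (hn : 3 ≤ n) (L : ℕ)
    (h : ∀ M : Matrix (Fin (n - 1)) (Fin (n - 1)) R, MemElemGroup M →
      HasAltUnitriangularFactorization L M) :
    ∀ M : Matrix (Fin n) (Fin n) R, MemElemGroup M →
      HasAltUnitriangularFactorization L M := by
  obtain ⟨m, rfl⟩ : ∃ m, n = m + 1 := ⟨n - 1, by omega⟩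
  have hm : 2 ≤ m := by omega
  intro M hM
  obtain ⟨l, hl, hprod⟩ := hM
  obtain ⟨gs, hgs, hval⟩ := Tavgen.list_cover hm l hl
  have h' : ∀ Ms : Matrix (Fin m) (Fin m) R, MemElemGroup Ms →
      HasAltUnitriangularFactorization L Ms := h
  have hu := Tavgen.ufact_good_list hm L h' gs hgs
  obtain ⟨f, hf, hfp⟩ := hu
  refine ⟨fun k => (f k).val, fun k => Tavgen.tri_to_if (hf k), ?_⟩
  calc (List.ofFn fun k => (f k).val).prod
      = ((List.ofFn f).prod).val := (Tavgen.val_ofFn_prod f).symm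
    _ = (gs.prod).val := by rw [hfp]
    _ = l.prod := hval
    _ = M := hprod
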